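/- For every n ≥ 1 there exists a residue a modulo 2n such that the Varshamov–Tenengolts code C_a = {x ∈ {0,1}^n : σ(x) ≡ a (mod 2n)} satisfies |C_a| · 2n ≥ 2^n; consequently there exists a code of length n and size at least 2^n/(2n) whose minimum Hamming distance is at least 3 and whose distinct codewords, viewed as lists of bits, have no common subsequence of length n − 1. -/

import Mathlib

/-- The moment of a binary word `x = x_1 … x_n`: `σ(x) = ∑ i, i * x_i` (1-based indexing). -/
def mom {n : ℕ} (x : Fin n → Bool) : ℕ :=
  ∑ i : Fin n, ((i : ℕ) + 1) * (if x i then 1 else 0)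

namespace Stmt15Aux

def bv (b : Bool) : ℕ := if b then 1 else 0

def momL : List Bool → ℕ
  | [] => 0
  | b :: t => bv b + t.count true + momL t

lemma count_ofFn : ∀ n (x : Fin n → Bool), (List.ofFn x).count true = ∑ i, bv (x i) := by
  intro n
  induction n with
  | zero => intro x; simp
  | succ n ih =>
      intro x
      rw [List.ofFn_succ, List.count_cons, Fin.sum_univ_succ, ih]
      cases h : x 0 <;> simp [bv, h, Nat.add_comm]

lemma momL_ofFn : ∀ n (x : Fin n → Bool), momL (List.ofFn x) = mom x := by
  intro n
  induction n with
  | zero => intro x; simp [mom, momL]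
  | succ n ih =>
      intro x
      rw [List.ofFn_succ]
      show bv (x 0) + (List.ofFn fun i => x i.succ).count true +
          momL (List.ofFn fun i => x i.succ) = mom x
      rw [count_ofFn, ih]
      simp only [mom, Fin.sum_univ_succ, Fin.val_succ, Fin.val_zero]
      rw [Nat.add_assoc, ← Finset.sum_add_distrib]
      congr 1
      · cases h : x 0 <;> simp [bv, h]
      · apply Finset.sum_congr rfl
        intro i _
        by_cases h : x i.succ = true <;> simp [bv, h] <;> omega

lemma momL_append (l1 l2 : List Bool) :
    momL (l1 ++ l2) = momL l1 + momL l2 + l1.length * l2.count true := by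
  induction l1 with
  | nil => simp [momL]
  | cons b t ih =>
      show bv b + List.count true (t ++ l2) + momL (t ++ l2)
          = (bv b + List.count true t + momL t) + momL l2
            + (t.length + 1) * List.count true l2
      rw [List.count_append, ih]
      ring

lemma momL_insert (l1 l2 : List Bool) (B : Bool) :
    momL (l1 ++ B :: l2) =
      momL (l1 ++ l2) + ((l1.length + 1) * bv B + l2.count true) := by
  rw [momL_append, momL_append]
  show momL l1 + (bv B + l2.count true + momL l2) +
      l1.length * (B :: l2).count true = _
  rw [List.count_cons]
  cases B <;> simp [bv] <;> ring

lemma exists_insert_of_sublist : ∀ {w l : List Bool}, w.Sublist l →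
    w.length + 1 = l.length →
    ∃ (l1 : List Bool) (b : Bool) (l2 : List Bool),
      l = l1 ++ b :: l2 ∧ w = l1 ++ l2 := by
  intro w l h
  induction h with
  | slnil => intro h; simp at h
  | cons b h ih =>
      intro hlen
      simp only [List.length_cons, Nat.add_right_cancel_iff] at hlen
      exact ⟨[], b, _, rfl, by simpa using h.eq_of_length hlen⟩
  | cons_cons b h ih =>
      intro hlen
      simp only [List.length_cons, Nat.add_right_cancel_iff] at hlen
      obtain ⟨l1, c, l2, h1, h2⟩ := ih hlen
      exact ⟨b :: l1, c, l2, by simp [h1], by simp [h2]⟩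

lemma core {l1 l2 m1 m2 : List Bool} {B C : Bool}
    (hw : l1 ++ l2 = m1 ++ m2) (hle : l1.length ≤ m1.length)
    (heq : (l1.length + 1) * bv B + l2.count true
          = (m1.length + 1) * bv C + m2.count true) :
    l1 ++ B :: l2 = m1 ++ C :: m2 := by
  obtain ⟨t, hm1, hl2⟩ : ∃ t, m1 = l1 ++ t ∧ l2 = t ++ m2 := by
    rcases List.append_eq_append_iff.mp hw with ⟨t, h1, h2⟩ | ⟨t, h1, h2⟩
    · exact ⟨t, h1, h2⟩
    · have hlen := congrArg List.length h1
      simp only [List.length_append] at hlen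
      have ht : t = [] := List.length_eq_zero_iff.mp (by omega)
      subst ht
      exact ⟨[], by simp [h1], by simp [h2]⟩
  subst hm1 hl2
  have hct : t.count true ≤ t.length := List.count_le_length
  rw [List.count_append, List.length_append] at heq
  suffices h : B :: t = t ++ [C] by
    have h2 : t ++ C :: m2 = B :: (t ++ m2) := by
      rw [show t ++ C :: m2 = (t ++ [C]) ++ m2 by simp, ← h]
      rfl
    rw [List.append_assoc, h2]
  cases B <;> cases C <;> simp [bv] at heq
  · -- false, false : count t = 0, t all false
    have hall : ∀ b ∈ t, b = false := by
      intro b hb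
      have : true ∉ t := List.count_eq_zero.mp (by omega)
      cases b
      · rfl
      · exact absurd hb this
    have : t = List.replicate t.length false :=
      List.eq_replicate_iff.mpr ⟨rfl, hall⟩
    rw [this, ← List.replicate_succ, List.replicate_succ']
  · -- false, true : impossible
    omega
  · -- true, false : impossible
    omega
  · -- true, true : count t = t.length, t all true
    have hall : ∀ b ∈ t, b = true := by
      intro b hb
      exact (List.count_eq_length.mp (by omega) b hb).symm
    have : t = List.replicate t.length true :=
      List.eq_replicate_iff.mpr ⟨rfl, hall⟩
    rw [this, ← List.replicate_succ, List.replicate_succ']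

lemma no_common {n : ℕ} (hn : 1 ≤ n) {x y : Fin n → Bool}
    (hmod : mom x % (2 * n) = mom y % (2 * n))
    {w : List Bool} (hlen : w.length = n - 1)
    (hx : w.Sublist (List.ofFn x)) (hy : w.Sublist (List.ofFn y)) : x = y := by
  obtain ⟨l1, B, l2, hx1, hx2⟩ := exists_insert_of_sublist hx (by simp [hlen]; omega)
  obtain ⟨m1, C, m2, hy1, hy2⟩ := exists_insert_of_sublist hy (by simp [hlen]; omega)
  have hw : l1 ++ l2 = m1 ++ m2 := by rw [← hx2, ← hy2]
  set α := (l1.length + 1) * bv B + l2.count true with hα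
  set β := (m1.length + 1) * bv C + m2.count true with hβ
  have hmx : mom x = momL (l1 ++ l2) + α := by
    rw [← momL_ofFn n x, hx1, momL_insert]
  have hmy : mom y = momL (l1 ++ l2) + β := by
    rw [← momL_ofFn n y, hy1, momL_insert, hw]
  have hlx : l1.length + l2.length + 1 = n := by
    have := congrArg List.length hx1
    simp at this
    omega
  have hly : m1.length + m2.length + 1 = n := by
    have := congrArg List.length hy1
    simp at this
    omega
  have hcl2 : l2.count true ≤ l2.length := List.count_le_length
  have hcm2 : m2.count true ≤ m2.length := List.count_le_length
  have hαn : α ≤ n := by cases B <;> simp [hα, bv] <;> omega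
  have hβn : β ≤ n := by cases C <;> simp [hβ, bv] <;> omega
  rw [hmx, hmy] at hmod
  have hmeq : α ≡ β [MOD 2 * n] := Nat.ModEq.add_left_cancel' _ hmod
  have hab : α = β := by
    have h1 : α % (2 * n) = α := Nat.mod_eq_of_lt (by omega)
    have h2 : β % (2 * n) = β := Nat.mod_eq_of_lt (by omega)
    rw [Nat.ModEq, h1, h2] at hmeq
    exact hmeq
  have hfin : l1 ++ B :: l2 = m1 ++ C :: m2 := by
    rcases le_total l1.length m1.length with h | h
    · exact core hw h hab
    · exact (core hw.symm h hab.symm).symm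
  apply List.ofFn_injective
  rw [hx1, hy1, hfin]

lemma dist3 {n : ℕ} (hn : 1 ≤ n) {x y : Fin n → Bool}
    (hmod : mom x % (2 * n) = mom y % (2 * n)) (hne : x ≠ y) :
    3 ≤ hammingDist x y := by
  by_contra hlt
  push_neg at hlt
  set D := Finset.univ.filter (fun i => x i ≠ y i) with hD
  have hdcard : hammingDist x y = D.card := rfl
  have hpos : 0 < D.card := by
    obtain ⟨i, hi⟩ := Function.ne_iff.mp hne
    exact Finset.card_pos.mpr ⟨i, by simp [hD, hi]⟩
  set e : Fin n → ℤ := fun i =>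
    (if x i then (1 : ℤ) else 0) - (if y i then 1 else 0) with he
  have he1 : ∀ i ∈ D, e i = 1 ∨ e i = -1 := by
    intro i hi
    have hxy : x i ≠ y i := (Finset.mem_filter.mp hi).2
    cases hx' : x i <;> cases hy' : y i
    · exact absurd (hx'.trans hy'.symm) hxy
    · right; simp [he, hx', hy']
    · left; simp [he, hx', hy']
    · exact absurd (hx'.trans hy'.symm) hxy
  have hsum : (mom x : ℤ) - (mom y : ℤ)
      = ∑ i ∈ D, (((i : ℕ) : ℤ) + 1) * e i := by
    have h1 : ∑ i ∈ D, (((i : ℕ) : ℤ) + 1) * e i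
        = ∑ i : Fin n, (((i : ℕ) : ℤ) + 1) * e i := by
      apply Finset.sum_filter_of_ne
      intro i _ hne0 hxy
      apply hne0
      simp [he, hxy]
    rw [h1, mom, mom]
    push_cast
    rw [← Finset.sum_sub_distrib]
    apply Finset.sum_congr rfl
    intro i _
    simp only [he]
    cases hx' : x i <;> cases hy' : y i <;> simp <;> ring
  have hdvd : ((2 * n : ℕ) : ℤ) ∣ ∑ i ∈ D, (((i : ℕ) : ℤ) + 1) * e i := by
    rw [← hsum]
    have h := Nat.ModEq.dvd (show mom x ≡ mom y [MOD 2 * n] from hmod)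
    exact dvd_sub_comm.mp h
  rw [hdcard] at hlt
  have hcard : D.card = 1 ∨ D.card = 2 := by omega
  rcases hcard with hc | hc
  · obtain ⟨i, hDi⟩ := Finset.card_eq_one.mp hc
    have hiD : i ∈ D := hDi ▸ Finset.mem_singleton_self i
    have hi : (i : ℕ) < n := i.isLt
    rw [hDi, Finset.sum_singleton] at hdvd
    rcases he1 i hiD with h1 | h1 <;> rw [h1] at hdvd <;>
      simp only [mul_one, mul_neg_one] at hdvd <;>
    · have hs0 := Int.eq_zero_of_abs_lt_dvd hdvd
        (abs_lt.mpr ⟨by push_cast; omega, by push_cast; omega⟩)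
      push_cast at hs0
      omega
  · obtain ⟨i, j, hij, hDij⟩ := Finset.card_eq_two.mp hc
    have hiD : i ∈ D := by rw [hDij]; simp
    have hjD : j ∈ D := by rw [hDij]; simp
    have hi : (i : ℕ) < n := i.isLt
    have hj : (j : ℕ) < n := j.isLt
    have hvij : (i : ℕ) ≠ (j : ℕ) := fun h => hij (Fin.ext h)
    rw [hDij, Finset.sum_pair hij] at hdvd
    rcases he1 i hiD with h1 | h1 <;> rcases he1 j hjD with h2 | h2 <;>
      rw [h1, h2] at hdvd <;>
      simp only [mul_one, mul_neg_one] at hdvd <;>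
    · have hs0 := Int.eq_zero_of_abs_lt_dvd hdvd
        (abs_lt.mpr ⟨by push_cast; omega, by push_cast; omega⟩)
      push_cast at hs0
      omega

end Stmt15Aux

/-- For every `n ≥ 1` there is a residue `a` mod `2n` with the VT code
`C_a = {x ∈ {0,1}^n : σ(x) ≡ a (mod 2n)}` satisfying `|C_a| · 2n ≥ 2^n`; `C_a` has
minimum Hamming distance at least 3, and its distinct codewords have no common
subsequence of length `n − 1`. -/
theorem stmt15 {n : ℕ} (hn : 1 ≤ n) :
    ∃ a : ℕ, ∃ Ca : Finset (Fin n → Bool),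
      Ca = Finset.univ.filter (fun x : Fin n → Bool => mom x % (2 * n) = a % (2 * n)) ∧
      2 ^ n ≤ Ca.card * (2 * n) ∧
      (∀ x ∈ Ca, ∀ y ∈ Ca, x ≠ y → 3 ≤ hammingDist x y) ∧
      (∀ x ∈ Ca, ∀ y ∈ Ca, x ≠ y →
        ¬ ∃ w : List Bool, w.length = n - 1 ∧
          w.Sublist (List.ofFn x) ∧ w.Sublist (List.ofFn y)) := by
  classical
  have h2n : 0 < 2 * n := by omega
  obtain ⟨a, hat, hmax⟩ := Finset.exists_max_image (Finset.range (2 * n))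
    (fun b => (Finset.univ.filter
      (fun x : Fin n → Bool => mom x % (2 * n) = b)).card)
    ⟨0, Finset.mem_range.mpr h2n⟩
  have ha : a % (2 * n) = a := Nat.mod_eq_of_lt (Finset.mem_range.mp hat)
  refine ⟨a, _, rfl, ?_, ?_, ?_⟩
  · -- cardinality bound
    have hfib : (Finset.univ : Finset (Fin n → Bool)).card
        = ∑ b ∈ Finset.range (2 * n),
          (Finset.univ.filter
            (fun x : Fin n → Bool => mom x % (2 * n) = b)).card :=
      Finset.card_eq_sum_card_fiberwise
        (fun x _ => Finset.mem_range.mpr (Nat.mod_lt _ h2n))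
    have hcard : (Finset.univ : Finset (Fin n → Bool)).card = 2 ^ n := by
      simp
    have hle : ∑ b ∈ Finset.range (2 * n),
        (Finset.univ.filter
          (fun x : Fin n → Bool => mom x % (2 * n) = b)).card
        ≤ (2 * n) * (Finset.univ.filter
          (fun x : Fin n → Bool => mom x % (2 * n) = a)).card := by
      calc ∑ b ∈ Finset.range (2 * n),
            (Finset.univ.filter
              (fun x : Fin n → Bool => mom x % (2 * n) = b)).card
          ≤ ∑ _b ∈ Finset.range (2 * n),
            (Finset.univ.filter
              (fun x : Fin n → Bool => mom x % (2 * n) = a)).card :=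
            Finset.sum_le_sum (fun b hb => hmax b hb)
        _ = (2 * n) * _ := by
            rw [Finset.sum_const, Finset.card_range, smul_eq_mul]
    simp only [ha]
    calc 2 ^ n = (Finset.univ : Finset (Fin n → Bool)).card := hcard.symm
      _ = _ := hfib
      _ ≤ _ := hle
      _ = _ * (2 * n) := Nat.mul_comm _ _
  · intro x hx y hy hne
    have hmx := (Finset.mem_filter.mp hx).2
    have hmy := (Finset.mem_filter.mp hy).2
    exact Stmt15Aux.dist3 hn (hmx.trans hmy.symm) hne
  · rintro x hx y hy hne ⟨w, hwlen, hwx, hwy⟩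
    have hmx := (Finset.mem_filter.mp hx).2
    have hmy := (Finset.mem_filter.mp hy).2
    exact hne (Stmt15Aux.no_common hn (hmx.trans hmy.symm) hwlen hwx hwy)
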